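/- Let G = SO(3), the compact group of 3×3 real matrices B with BᵀB = I and det B = 1, and let H be the closed subgroup of matrices of block form diag(A, 1) with A ∈ SO(2) (rotations about the third coordinate axis). Then the double coset convolution on probability Radon measures on G//H is commutative: μ₁ ∗ μ₂ = μ₂ ∗ μ₁ for all probability Radon measures μ₁, μ₂ on G//H; equivalently δ_{HxH} ∗ δ_{HyH} = δ_{HyH} ∗ δ_{HxH} for all x, y ∈ SO(3). In other words, (SO(3), SO(2)) is a Gelfand pair. -/

import Mathlib

open MeasureTheory Topology
open scoped ENNReal

noncomputable section

section DoubleCosets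

variable {G : Type*} [Group G] [TopologicalSpace G]

/-- The double coset equivalence relation on `G` determined by a subgroup `H`:
`x ∼ y` iff `y ∈ HxH`. -/
def dcSetoid (H : Subgroup G) : Setoid G where
  r x y := ∃ h₁ ∈ H, ∃ h₂ ∈ H, y = h₁ * x * h₂
  iseqv := by
    constructor
    · intro x
      exact ⟨1, H.one_mem, 1, H.one_mem, by simp⟩
    · rintro x y ⟨h₁, hh₁, h₂, hh₂, rfl⟩
      exact ⟨h₁⁻¹, H.inv_mem hh₁, h₂⁻¹, H.inv_mem hh₂, by group⟩
    · rintro x y z ⟨h₁, hh₁, h₂, hh₂, rfl⟩ ⟨k₁, hk₁, k₂, hk₂, rfl⟩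
      exact ⟨k₁ * h₁, H.mul_mem hk₁ hh₁, h₂ * k₂, H.mul_mem hh₂ hk₂, by group⟩

/-- The space `G//H` of double cosets `HxH`, with the quotient topology. -/
def DCos (H : Subgroup G) : Type _ := Quotient (dcSetoid H)

/-- The projection `P : G → G//H`, `x ↦ HxH`. -/
def Pmap (H : Subgroup G) : G → DCos H := Quotient.mk (dcSetoid H)

instance (H : Subgroup G) : TopologicalSpace (DCos H) :=
  inferInstanceAs (TopologicalSpace (Quotient (dcSetoid H)))

noncomputable instance (H : Subgroup G) : MeasurableSpace (DCos H) := borel (DCos H)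

instance (H : Subgroup G) : BorelSpace (DCos H) := ⟨rfl⟩

lemma continuous_Pmap (H : Subgroup G) : Continuous (Pmap H) :=
  continuous_quot_mk

instance [CompactSpace G] (H : Subgroup G) : CompactSpace (DCos H) := by
  constructor
  rw [← (Set.range_eq_univ.mpr (fun q => Quot.exists_rep q) : Set.range (Pmap H) = Set.univ)]
  exact isCompact_range (continuous_Pmap H)

lemma measurable_Pmap [MeasurableSpace G] [BorelSpace G] (H : Subgroup G) :
    Measurable (Pmap H) :=
  (continuous_Pmap H).measurable

variable [MeasurableSpace G]

/-- The convolution of two (finite positive Radon) measures on the group `G`: the pushforward of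
the product measure under multiplication. -/
noncomputable def mconv (μ ν : Measure G) : Measure G :=
  (μ.prod ν).map fun p : G × G => p.1 * p.2

/-- `QG μ_H f x = ∫_{H×H} f(h₁ x h₂) dμ_H(h₁) dμ_H(h₂)`, the function on `G` inducing
`Q(f) : G//H → ℂ`. -/
noncomputable def QG (μH : Measure G) (f : G → ℂ) (x : G) : ℂ :=
  ∫ h₁, ∫ h₂, f (h₁ * x * h₂) ∂μH ∂μH

/-- `IsQtilde μ_H μ ν` says that `ν = Q̃(μ)`, i.e. `ν` is the measure on `G` determined by
`∫_G f dν = ∫_{G//H} Q(f) dμ` for all `f ∈ C(G)`, where `Q(f)` is the continuous function on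
`G//H` with `Q(f) ∘ P = QG μ_H f`. -/
def IsQtilde {H : Subgroup G} (μH : Measure G) (μ : Measure (DCos H)) (ν : Measure G) : Prop :=
  ∀ (f : C(G, ℂ)) (F : DCos H → ℂ), Continuous F → (∀ x : G, F (Pmap H x) = QG μH f x) →
    ∫ g, f g ∂ν = ∫ q, F q ∂μ

end DoubleCosets

section SO3

open Matrix

/-- The 3×3 real matrices. -/
abbrev Mat3 := Matrix (Fin 3) (Fin 3) ℝ

/-- `SO(3) = {B ∈ M₃(ℝ) : BᵀB = I, det B = 1}`, as a subgroup of the units of the matrix ring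
(so its coerced type is a compact topological group with the topology inherited from the
3×3 real matrices). -/
def SO3 : Subgroup (Matrix.GeneralLinearGroup (Fin 3) ℝ) where
  carrier := {A | (A : Mat3)ᵀ * (A : Mat3) = 1 ∧ (A : Mat3).det = 1}
  one_mem' := by
    constructor <;> simp
  mul_mem' := by
    rintro a b ⟨ha1, ha2⟩ ⟨hb1, hb2⟩
    constructor
    · rw [Units.val_mul, Matrix.transpose_mul, mul_assoc, ← mul_assoc ((a : Mat3)ᵀ), ha1,
        one_mul, hb1]
    · rw [Units.val_mul, Matrix.det_mul, ha2, hb2, mul_one]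
  inv_mem' := by
    rintro a ⟨ha1, ha2⟩
    have hval : ((a⁻¹ : (Matrix.GeneralLinearGroup (Fin 3) ℝ)) : Mat3) = (a : Mat3)ᵀ := by
      calc ((a⁻¹ : (Matrix.GeneralLinearGroup (Fin 3) ℝ)) : Mat3)
          = 1 * ((a⁻¹ : (Matrix.GeneralLinearGroup (Fin 3) ℝ)) : Mat3) := (one_mul _).symm
        _ = ((a : Mat3)ᵀ * (a : Mat3)) * ((a⁻¹ : (Matrix.GeneralLinearGroup (Fin 3) ℝ)) : Mat3) := by
            rw [ha1]
        _ = (a : Mat3)ᵀ * ((a : Mat3) * ((a⁻¹ : (Matrix.GeneralLinearGroup (Fin 3) ℝ)) : Mat3)) := by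
            rw [mul_assoc]
        _ = (a : Mat3)ᵀ := by rw [← Units.val_mul, mul_inv_cancel, Units.val_one, mul_one]
    constructor
    · rw [hval, Matrix.transpose_transpose]
      exact mul_eq_one_comm.mp ha1
    · rw [hval, Matrix.det_transpose]
      exact ha2

noncomputable instance : MeasurableSpace (↥SO3) := borel (↥SO3)

instance : BorelSpace (↥SO3) := ⟨rfl⟩

/-- The matrix of an element of `SO(3)`. -/
def so3Mat (g : ↥SO3) : Mat3 := ((g : Matrix.GeneralLinearGroup (Fin 3) ℝ) : Mat3)

/-- `SO(2)` embedded in `SO(3)` as the closed subgroup of matrices of block form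
`diag(A, 1)` with `A ∈ SO(2)` (rotations about the third coordinate axis). -/
def SO2in : Subgroup (↥SO3) where
  carrier := {g | ∃ A : Matrix (Fin 2) (Fin 2) ℝ, Aᵀ * A = 1 ∧ A.det = 1 ∧
    so3Mat g = Matrix.reindex finSumFinEquiv finSumFinEquiv
      (Matrix.fromBlocks A 0 0 (1 : Matrix (Fin 1) (Fin 1) ℝ))}
  one_mem' := by
    refine ⟨1, by simp, by simp, ?_⟩
    simp [so3Mat, Matrix.fromBlocks_one, Matrix.reindex_apply, Matrix.submatrix_one_equiv]
  mul_mem' := by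
    rintro a b ⟨A, hA1, hA2, hA3⟩ ⟨B, hB1, hB2, hB3⟩
    refine ⟨A * B, ?_, ?_, ?_⟩
    · rw [Matrix.transpose_mul, mul_assoc, ← mul_assoc Aᵀ, hA1, one_mul, hB1]
    · rw [Matrix.det_mul, hA2, hB2, mul_one]
    · have hcoe : so3Mat (a * b) = so3Mat a * so3Mat b := rfl
      rw [hcoe, hA3, hB3]
      simp only [Matrix.reindex_apply, Matrix.submatrix_mul_equiv,
        Matrix.fromBlocks_multiply]
      simp
  inv_mem' := by
    rintro a ⟨A, hA1, hA2, hA3⟩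
    refine ⟨Aᵀ, ?_, ?_, ?_⟩
    · rw [Matrix.transpose_transpose]
      exact mul_eq_one_comm.mp hA1
    · rw [Matrix.det_transpose]
      exact hA2
    · have hmul : so3Mat a * so3Mat a⁻¹ = so3Mat (a * a⁻¹) := rfl
      have hone : so3Mat a * so3Mat a⁻¹ = 1 := by
        rw [hmul, mul_inv_cancel]
        simp [so3Mat]
      have horth : (so3Mat a)ᵀ * so3Mat a = 1 := a.2.1
      have h1 : so3Mat a⁻¹ = (so3Mat a)ᵀ := by
        calc so3Mat a⁻¹ = 1 * so3Mat a⁻¹ := (one_mul _).symm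
          _ = ((so3Mat a)ᵀ * so3Mat a) * so3Mat a⁻¹ := by rw [horth]
          _ = (so3Mat a)ᵀ * (so3Mat a * so3Mat a⁻¹) := by rw [mul_assoc]
          _ = (so3Mat a)ᵀ := by rw [hone, mul_one]
      rw [h1, hA3]
      simp [Matrix.reindex_apply, Matrix.transpose_submatrix, Matrix.fromBlocks_transpose]

end SO3

section Aux
set_option synthInstance.maxHeartbeats 1000000
set_option maxHeartbeats 1000000

open Matrix MeasureTheory

namespace SO3Aux

instance : SecondCountableTopology Mat3 :=
  inferInstanceAs (SecondCountableTopology (Fin 3 → Fin 3 → ℝ))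

instance : SecondCountableTopology (Mat3ᵐᵒᵖ) :=
  MulOpposite.opHomeomorph.symm.isEmbedding.secondCountableTopology

instance : SecondCountableTopology (Matrix.GeneralLinearGroup (Fin 3) ℝ) :=
  (Units.isEmbedding_embedProduct).secondCountableTopology

instance : TopologicalSpace.PseudoMetrizableSpace (Mat3ᵐᵒᵖ) :=
  MulOpposite.opHomeomorph.symm.isEmbedding.pseudoMetrizableSpace

instance : TopologicalSpace.PseudoMetrizableSpace (Matrix.GeneralLinearGroup (Fin 3) ℝ) :=
  (Units.isEmbedding_embedProduct).pseudoMetrizableSpace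


instance : SecondCountableTopology ↥SO3 :=
  Topology.IsEmbedding.subtypeVal.secondCountableTopology

instance : TopologicalSpace.PseudoMetrizableSpace ↥SO3 :=
  Topology.IsEmbedding.subtypeVal.pseudoMetrizableSpace

example : TopologicalSpace.PseudoMetrizableSpace ↥SO3 := inferInstance
example : SecondCountableTopology ↥SO3 := inferInstance
example : IsTopologicalGroup ↥SO3 := inferInstance
example : HasOuterApproxClosed ↥SO3 := inferInstance
example : OpensMeasurableSpace ↥SO3 := inferInstance

/-- The compact set of special orthogonal matrices. -/
def SO3set : Set Mat3 := {A | Aᵀ * A = 1 ∧ A.det = 1}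

lemma isCompact_SO3set : IsCompact SO3set := by
  have hsub : SO3set ⊆ Set.pi Set.univ (fun _ : Fin 3 => Set.pi Set.univ
      (fun _ : Fin 3 => Set.Icc (-1:ℝ) 1)) := by
    rintro A ⟨h1, -⟩ i - j -
    have hd : (Aᵀ * A) j j = 1 := by rw [h1]; simp
    rw [Matrix.mul_apply] at hd
    simp only [Matrix.transpose_apply] at hd
    have hle : A i j * A i j ≤ 1 := by
      rw [← hd]
      exact Finset.single_le_sum (f := fun k => A k j * A k j)
        (fun k _ => mul_self_nonneg _) (Finset.mem_univ i)
    constructor <;> nlinarith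
  have hK : IsCompact (Set.pi Set.univ (fun _ : Fin 3 => Set.pi Set.univ
      (fun _ : Fin 3 => Set.Icc (-1:ℝ) 1))) :=
    isCompact_univ_pi fun _ => isCompact_univ_pi fun _ => isCompact_Icc
  have hclosed : IsClosed SO3set := by
    have : SO3set = (fun A : Mat3 => (Aᵀ * A, A.det)) ⁻¹' {((1 : Mat3), (1:ℝ))} := by
      ext A; simp [SO3set, Set.mem_preimage, Prod.ext_iff]
    rw [this]
    exact (isClosed_singleton).preimage
      ((continuous_id.matrix_transpose.matrix_mul continuous_id).prodMk
        continuous_id.matrix_det)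
  exact hK.of_isClosed_subset hclosed hsub

/-- Build an element of `SO3` from a special orthogonal matrix. -/
def mkSO3 (A : Mat3) (h : A ∈ SO3set) : ↥SO3 :=
  ⟨⟨A, Aᵀ, mul_eq_one_comm.mp h.1, h.1⟩, ⟨h.1, h.2⟩⟩

@[simp] lemma so3Mat_mkSO3 (A : Mat3) (h : A ∈ SO3set) : so3Mat (mkSO3 A h) = A := rfl

lemma so3Mat_injective : Function.Injective so3Mat := by
  intro a b hab
  exact Subtype.ext (Units.ext hab)

lemma continuous_mkSO3 : Continuous (fun p : SO3set => mkSO3 p.1 p.2) := by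
  apply Continuous.subtype_mk
  rw [Units.continuous_iff]
  constructor
  · exact continuous_subtype_val
  · exact continuous_subtype_val.matrix_transpose

lemma surjective_mkSO3 : Function.Surjective (fun p : SO3set => mkSO3 p.1 p.2) := by
  intro g
  exact ⟨⟨so3Mat g, g.2.1, g.2.2⟩, so3Mat_injective rfl⟩

instance : CompactSpace ↥SO3 := by
  constructor
  rw [← Set.range_eq_univ.mpr surjective_mkSO3]
  have : CompactSpace SO3set := isCompact_iff_compactSpace.mp isCompact_SO3set
  exact isCompact_range continuous_mkSO3

end SO3Aux

end Aux

section Geo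
set_option maxHeartbeats 1000000
set_option synthInstance.maxHeartbeats 1000000

open Matrix SO3Aux

namespace SO3Geo

/-- The 3×3 block matrix `diag(A, 1)`. -/
def blockM (A : Matrix (Fin 2) (Fin 2) ℝ) : Mat3 :=
  Matrix.reindex finSumFinEquiv finSumFinEquiv
    (Matrix.fromBlocks A 0 0 (1 : Matrix (Fin 1) (Fin 1) ℝ))

lemma fsfe0 : (finSumFinEquiv (m := 2) (n := 1)).symm (0 : Fin 3) = Sum.inl 0 := by decide
lemma fsfe1 : (finSumFinEquiv (m := 2) (n := 1)).symm (1 : Fin 3) = Sum.inl 1 := by decide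
lemma fsfe2 : (finSumFinEquiv (m := 2) (n := 1)).symm (2 : Fin 3) = Sum.inr 0 := by decide

lemma blockM_eq (A : Matrix (Fin 2) (Fin 2) ℝ) :
    blockM A = Matrix.of ![![A 0 0, A 0 1, 0], ![A 1 0, A 1 1, 0], ![0, 0, 1]] := by
  ext i j
  fin_cases i <;> fin_cases j <;>
    simp [blockM, Matrix.reindex_apply, Matrix.submatrix_apply, fsfe0, fsfe1, fsfe2]

lemma so3Mat_orth (a : ↥SO3) : (so3Mat a)ᵀ * so3Mat a = 1 := a.2.1

lemma so3Mat_det (a : ↥SO3) : (so3Mat a).det = 1 := a.2.2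

lemma so3Mat_mul (a b : ↥SO3) : so3Mat (a * b) = so3Mat a * so3Mat b := rfl

lemma so3Mat_one : so3Mat (1 : ↥SO3) = 1 := rfl

lemma so3Mat_inv (a : ↥SO3) : so3Mat a⁻¹ = (so3Mat a)ᵀ := by
  have hone : so3Mat a * so3Mat a⁻¹ = 1 := by
    have h : so3Mat a * so3Mat a⁻¹ = so3Mat (a * a⁻¹) := rfl
    rw [h, mul_inv_cancel, so3Mat_one]
  calc so3Mat a⁻¹ = 1 * so3Mat a⁻¹ := (one_mul _).symm
    _ = ((so3Mat a)ᵀ * so3Mat a) * so3Mat a⁻¹ := by rw [so3Mat_orth]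
    _ = (so3Mat a)ᵀ * (so3Mat a * so3Mat a⁻¹) := by rw [mul_assoc]
    _ = (so3Mat a)ᵀ := by rw [hone, mul_one]

lemma mem_SO2in_iff_blockM (g : ↥SO3) :
    g ∈ SO2in ↔ ∃ A : Matrix (Fin 2) (Fin 2) ℝ, Aᵀ * A = 1 ∧ A.det = 1 ∧
      so3Mat g = blockM A := Iff.rfl

/-- An element of `SO(3)` whose third column is `e₃` lies in the embedded `SO(2)`. -/
lemma mem_SO2in_of_col (g : ↥SO3) (h0 : so3Mat g 0 2 = 0) (h1 : so3Mat g 1 2 = 0)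
    (h2 : so3Mat g 2 2 = 1) : g ∈ SO2in := by
  set M := so3Mat g with hM
  have entry : ∀ i j : Fin 3, M 0 i * M 0 j + M 1 i * M 1 j + M 2 i * M 2 j
      = (1 : Mat3) i j := by
    intro i j
    have h := congrFun (congrFun (so3Mat_orth g) i) j
    rw [Matrix.mul_apply, Fin.sum_univ_three] at h
    simpa [Matrix.transpose_apply] using h
  have h20 : M 2 0 = 0 := by
    have := entry 0 2
    rw [h0, h1, h2] at this
    simpa [Matrix.one_apply] using this
  have h21 : M 2 1 = 0 := by
    have := entry 1 2
    rw [h0, h1, h2] at this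
    simpa [Matrix.one_apply] using this
  rw [mem_SO2in_iff_blockM]
  refine ⟨!![M 0 0, M 0 1; M 1 0, M 1 1], ?_, ?_, ?_⟩
  · ext i j
    have e00 := entry 0 0
    have e01 := entry 0 1
    have e10 := entry 1 0
    have e11 := entry 1 1
    rw [h20] at e00 e01
    rw [h21] at e11 e10
    fin_cases i <;> fin_cases j <;>
      simp only [Matrix.mul_apply, Fin.sum_univ_two, Matrix.transpose_apply,
        Matrix.cons_val', Matrix.cons_val_zero, Matrix.cons_val_one, Matrix.head_cons,
        Matrix.head_fin_const, Matrix.empty_val', Matrix.cons_val_fin_one,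
        Matrix.one_apply, Matrix.of_apply] <;>
      simp only [Matrix.one_apply] at e00 e01 e10 e11 <;>
      norm_num at * <;> nlinarith [e00, e01, e10, e11]
  · have hdet := so3Mat_det g
    rw [Matrix.det_fin_three] at hdet
    rw [Matrix.det_fin_two_of]
    rw [← hM] at hdet
    rw [h0, h1, h2, h20, h21] at hdet
    nlinarith [hdet]
  · rw [blockM_eq, ← hM]
    ext i j
    fin_cases i <;> fin_cases j <;>
      simp [h0, h1, h2, h20, h21]

lemma mem_SO2in_iff (g : ↥SO3) :
    g ∈ SO2in ↔ (so3Mat g 0 2 = 0 ∧ so3Mat g 1 2 = 0 ∧ so3Mat g 2 2 = 1) := by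
  constructor
  · intro hg
    obtain ⟨A, -, -, hA3⟩ := (mem_SO2in_iff_blockM g).mp hg
    rw [hA3, blockM_eq]
    refine ⟨by simp, by simp, by simp⟩
  · rintro ⟨h0, h1, h2⟩
    exact mem_SO2in_of_col g h0 h1 h2

lemma blockM_mem_SO3set {A : Matrix (Fin 2) (Fin 2) ℝ} (h1 : Aᵀ * A = 1) (h2 : A.det = 1) :
    blockM A ∈ SO3set := by
  constructor
  · unfold blockM
    simp only [Matrix.reindex_apply, Matrix.transpose_submatrix,
      Matrix.fromBlocks_transpose, Matrix.submatrix_mul_equiv, Matrix.fromBlocks_multiply]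
    simp [h1, Matrix.fromBlocks_one, Matrix.submatrix_one_equiv]
  · unfold blockM
    rw [Matrix.reindex_apply, Matrix.det_submatrix_equiv_self,
      Matrix.det_fromBlocks_zero₂₁]
    simp [h2]

/-- Build an element of the embedded `SO(2)` from a 2×2 special orthogonal matrix. -/
def mkH (A : Matrix (Fin 2) (Fin 2) ℝ) (h1 : Aᵀ * A = 1) (h2 : A.det = 1) : ↥SO3 :=
  mkSO3 (blockM A) (blockM_mem_SO3set h1 h2)

lemma so3Mat_mkH (A : Matrix (Fin 2) (Fin 2) ℝ) (h1 : Aᵀ * A = 1) (h2 : A.det = 1) :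
    so3Mat (mkH A h1 h2) = blockM A := rfl

lemma mkH_mem (A : Matrix (Fin 2) (Fin 2) ℝ) (h1 : Aᵀ * A = 1) (h2 : A.det = 1) :
    mkH A h1 h2 ∈ SO2in :=
  (mem_SO2in_iff_blockM _).mpr ⟨A, h1, h2, rfl⟩

/-- A rotation of the plane carrying `(x, y)` to `(√(x²+y²), 0)`. -/
lemma rot_exists (x y : ℝ) : ∃ A : Matrix (Fin 2) (Fin 2) ℝ, Aᵀ * A = 1 ∧ A.det = 1 ∧
    A 0 0 * x + A 0 1 * y = Real.sqrt (x * x + y * y) ∧ A 1 0 * x + A 1 1 * y = 0 := by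
  set r := Real.sqrt (x * x + y * y) with hr
  have hr2 : r * r = x * x + y * y :=
    Real.mul_self_sqrt (by nlinarith [mul_self_nonneg x, mul_self_nonneg y])
  by_cases h : x * x + y * y = 0
  · have hx : x = 0 := by nlinarith [mul_self_nonneg x, mul_self_nonneg y]
    have hy : y = 0 := by nlinarith [mul_self_nonneg x, mul_self_nonneg y]
    have hr0 : r = 0 := by rw [hr, hx, hy]; simp
    refine ⟨1, by simp, by simp, ?_, ?_⟩ <;>
      simp [hx, hy, hr0, Matrix.one_apply]
  · have hrpos : 0 < r := Real.sqrt_pos.mpr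
      (lt_of_le_of_ne (by nlinarith [mul_self_nonneg x, mul_self_nonneg y]) (Ne.symm h))
    have hrne : r ≠ 0 := ne_of_gt hrpos
    refine ⟨Matrix.of ![![x/r, y/r], ![-y/r, x/r]], ?_, ?_, ?_, ?_⟩
    · ext i j
      fin_cases i <;> fin_cases j <;>
        · simp only [Matrix.mul_apply, Fin.sum_univ_two, Matrix.transpose_apply,
            Matrix.of_apply, Matrix.cons_val', Matrix.cons_val_zero, Matrix.cons_val_one,
            Matrix.head_cons, Matrix.empty_val', Matrix.cons_val_fin_one,
            Matrix.head_fin_const, Matrix.one_apply]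
          norm_num
          field_simp
          nlinarith [hr2]
    · rw [Matrix.det_fin_two]
      simp only [Matrix.of_apply, Matrix.cons_val', Matrix.cons_val_zero,
        Matrix.cons_val_one, Matrix.head_cons, Matrix.empty_val',
        Matrix.cons_val_fin_one, Matrix.head_fin_const]
      field_simp
      nlinarith [hr2]
    · simp only [Matrix.of_apply, Matrix.cons_val', Matrix.cons_val_zero,
        Matrix.cons_val_one, Matrix.head_cons]
      field_simp
      nlinarith [hr2]
    · simp only [Matrix.of_apply, Matrix.cons_val', Matrix.cons_val_zero,
        Matrix.cons_val_one, Matrix.head_cons]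
      field_simp
      ring

/-- The canonical rotation about the second axis. -/
def aMat (r c : ℝ) : Mat3 := Matrix.of ![![c, 0, r], ![0, 1, 0], ![-r, 0, c]]

lemma aMat_transpose (r c : ℝ) :
    (aMat r c)ᵀ = Matrix.of ![![c, 0, -r], ![0, 1, 0], ![r, 0, c]] := by
  ext i j
  fin_cases i <;> fin_cases j <;> simp [aMat, Matrix.transpose_apply]

lemma aMat_mem {r c : ℝ} (h : r * r + c * c = 1) : aMat r c ∈ SO3set := by
  constructor
  · rw [aMat_transpose]
    ext i j
    fin_cases i <;> fin_cases j <;>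
      simp [aMat, Matrix.mul_apply, Fin.sum_univ_three, Matrix.one_apply] <;>
      nlinarith [h]
  · rw [Matrix.det_fin_three]
    simp [aMat]
    nlinarith [h]

lemma neg_one_orth : ((-1 : Matrix (Fin 2) (Fin 2) ℝ))ᵀ * (-1) = 1 := by
  simp

lemma neg_one_det : (-1 : Matrix (Fin 2) (Fin 2) ℝ).det = 1 := by
  simp [Matrix.det_neg]

end SO3Geo

end Geo

section Geo2
set_option maxHeartbeats 1000000
set_option synthInstance.maxHeartbeats 1000000

open Matrix SO3Aux

namespace SO3Geo

lemma inv_mem (g : ↥SO3) : ∃ h₁ ∈ SO2in, ∃ h₂ ∈ SO2in, g⁻¹ = h₁ * g * h₂ := by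
  have hsum : so3Mat g 0 2 * so3Mat g 0 2 + so3Mat g 1 2 * so3Mat g 1 2
      + so3Mat g 2 2 * so3Mat g 2 2 = 1 := by
    have h := congrFun (congrFun (so3Mat_orth g) 2) 2
    rw [Matrix.mul_apply, Fin.sum_univ_three] at h
    simpa [Matrix.transpose_apply, Matrix.one_apply] using h
  obtain ⟨A, hA1, hA2, hAx, hAy⟩ := rot_exists (so3Mat g 0 2) (so3Mat g 1 2)
  set r := Real.sqrt (so3Mat g 0 2 * so3Mat g 0 2 + so3Mat g 1 2 * so3Mat g 1 2) with hrdef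
  have hr2 : r * r = so3Mat g 0 2 * so3Mat g 0 2 + so3Mat g 1 2 * so3Mat g 1 2 :=
    Real.mul_self_sqrt (by nlinarith [mul_self_nonneg (so3Mat g 0 2), mul_self_nonneg (so3Mat g 1 2)])
  have hrc : r * r + so3Mat g 2 2 * so3Mat g 2 2 = 1 := by nlinarith [hr2, hsum]
  set h := mkH A hA1 hA2 with hhdef
  set a := mkSO3 (aMat r (so3Mat g 2 2)) (aMat_mem hrc) with hadef
  set u := a⁻¹ * (h * g) with hudef
  have col0 : (blockM A * so3Mat g) 0 2 = r := by
    rw [blockM_eq, Matrix.mul_apply, Fin.sum_univ_three]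
    simp
    linarith [hAx]
  have col1 : (blockM A * so3Mat g) 1 2 = 0 := by
    rw [blockM_eq, Matrix.mul_apply, Fin.sum_univ_three]
    simp
    linarith [hAy]
  have col2 : (blockM A * so3Mat g) 2 2 = so3Mat g 2 2 := by
    rw [blockM_eq, Matrix.mul_apply, Fin.sum_univ_three]
    simp
  have hu : so3Mat u = (aMat r (so3Mat g 2 2))ᵀ * (blockM A * so3Mat g) := by
    rw [hudef, so3Mat_mul, so3Mat_inv, so3Mat_mul, hadef, so3Mat_mkSO3, hhdef,
      so3Mat_mkH]
  have humem : u ∈ SO2in := by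
    apply mem_SO2in_of_col
    · rw [hu, aMat_transpose, Matrix.mul_apply, Fin.sum_univ_three, col0, col1, col2]
      simp
      ring
    · rw [hu, aMat_transpose, Matrix.mul_apply, Fin.sum_univ_three, col0, col1, col2]
      simp
    · rw [hu, aMat_transpose, Matrix.mul_apply, Fin.sum_univ_three, col0, col1, col2]
      simp
      nlinarith [hrc]
  set r0 := mkH (-1) neg_one_orth neg_one_det with hr0def
  have hr0mem : r0 ∈ SO2in := mkH_mem _ _ _
  have hconj : a⁻¹ = r0 * a * r0 := by
    apply so3Mat_injective
    rw [so3Mat_inv, so3Mat_mul, so3Mat_mul, hadef, so3Mat_mkSO3, hr0def, so3Mat_mkH,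
      aMat_transpose, blockM_eq]
    ext i j
    fin_cases i <;> fin_cases j <;>
      simp [aMat, Matrix.mul_apply, Fin.sum_univ_three, Matrix.neg_apply,
        Matrix.one_apply, Matrix.vecHead, Matrix.vecTail, Function.comp] <;> try ring
  have hgu : g = h⁻¹ * (a * u) := by rw [hudef]; group
  refine ⟨u⁻¹ * r0 * h, ?_, u⁻¹ * r0 * h, ?_, ?_⟩
  · exact mul_mem (mul_mem (SO2in.inv_mem humem) hr0mem) (mkH_mem _ _ _)
  · exact mul_mem (mul_mem (SO2in.inv_mem humem) hr0mem) (mkH_mem _ _ _)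
  · calc g⁻¹ = (h⁻¹ * (a * u))⁻¹ := by rw [← hgu]
      _ = u⁻¹ * a⁻¹ * h := by group
      _ = u⁻¹ * (r0 * a * r0) * h := by rw [hconj]
      _ = (u⁻¹ * r0 * h) * g * (u⁻¹ * r0 * h) := by rw [hgu]; group

end SO3Geo

end Geo2

section MeasureAux

open Matrix MeasureTheory SO3Aux

/-- Geometric key lemma: `g⁻¹ ∈ H g H` for every `g ∈ SO(3)` (Cartan decomposition). -/
lemma inv_mem_double_coset (g : ↥SO3) :
    ∃ h₁ ∈ SO2in, ∃ h₂ ∈ SO2in, g⁻¹ = h₁ * g * h₂ :=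
  SO3Geo.inv_mem g

lemma Pmap_inv (g : ↥SO3) : Pmap SO2in g⁻¹ = Pmap SO2in g := by
  obtain ⟨h₁, hh₁, h₂, hh₂, hg⟩ := inv_mem_double_coset g
  exact (Quotient.sound (by exact ⟨h₁, hh₁, h₂, hh₂, hg⟩ :
    (dcSetoid SO2in).r g g⁻¹)).symm

lemma mem_SO2in_iff (g : ↥SO3) :
    g ∈ SO2in ↔ (so3Mat g 0 2 = 0 ∧ so3Mat g 1 2 = 0 ∧ so3Mat g 2 2 = 1) :=
  SO3Geo.mem_SO2in_iff g

lemma isClosed_SO2in : IsClosed (SO2in : Set ↥SO3) := by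
  have : (SO2in : Set ↥SO3) = (fun g : ↥SO3 =>
      (so3Mat g 0 2, so3Mat g 1 2, so3Mat g 2 2)) ⁻¹' {((0:ℝ), (0:ℝ), (1:ℝ))} := by
    ext g
    simp only [Set.mem_preimage, Set.mem_singleton_iff, Prod.ext_iff, SetLike.mem_coe]
    exact (mem_SO2in_iff g).trans (by tauto)
  rw [this]
  have hcont : Continuous (fun g : ↥SO3 => so3Mat g) :=
    Units.continuous_val.comp continuous_subtype_val
  exact isClosed_singleton.preimage (by fun_prop)

lemma measurableSet_SO2in : MeasurableSet (SO2in : Set ↥SO3) :=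
  isClosed_SO2in.measurableSet

/-- Integrability of continuous functions on a compact space. -/
lemma contIntegrable {X : Type*} [MeasurableSpace X] [TopologicalSpace X]
    [OpensMeasurableSpace X] [CompactSpace X] (μ : Measure X) [IsFiniteMeasure μ]
    {E : Type*} [NormedAddCommGroup E] {f : X → E} (hf : Continuous f) : Integrable f μ :=
  hf.integrable_of_hasCompactSupport
    (IsCompact.of_isClosed_subset isCompact_univ (isClosed_tsupport f) (Set.subset_univ _))

/-- Continuity of parametric integrals. -/
lemma cont_param {Y : Type*} [TopologicalSpace Y] [MeasurableSpace Y] [OpensMeasurableSpace Y]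
    (μ : Measure Y) [IsFiniteMeasure μ] (f : C(↥SO3, ℂ)) {l : ↥SO3 → Y → ↥SO3}
    (hl : Continuous fun p : ↥SO3 × Y => l p.1 p.2) :
    Continuous fun x => ∫ h, f (l x h) ∂μ := by
  apply continuous_of_dominated (bound := fun _ => ‖f‖)
  · intro x
    exact (f.continuous.comp (hl.comp (Continuous.prodMk_right x))).aestronglyMeasurable
  · intro x
    exact Filter.Eventually.of_forall fun h => f.norm_coe_le_norm _
  · exact integrable_const _
  · exact Filter.Eventually.of_forall fun h =>
      f.continuous.comp (hl.comp (continuous_id.prodMk continuous_const))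

variable {μH : Measure ↥SO3} [IsProbabilityMeasure μH]

lemma qg_eq_prod (f : C(↥SO3, ℂ)) (x : ↥SO3) :
    QG μH f x = ∫ p : ↥SO3 × ↥SO3, f (p.1 * x * p.2) ∂(μH.prod μH) :=
  (MeasureTheory.integral_prod _ (contIntegrable _
    (f.continuous.comp ((continuous_fst.mul continuous_const).mul continuous_snd)))).symm

lemma qg_continuous (f : C(↥SO3, ℂ)) : Continuous (QG μH f) := by
  have heq : QG μH f = fun x => ∫ p : ↥SO3 × ↥SO3, f (p.1 * x * p.2) ∂(μH.prod μH) :=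
    funext (qg_eq_prod f)
  rw [heq]
  exact cont_param (μH.prod μH) f (l := fun x p => p.1 * x * p.2)
    (by fun_prop)

section Inv

variable (hμHconc : μH ((SO2in : Set ↥SO3))ᶜ = 0)
variable (hμHinv : ∀ h ∈ SO2in,
      μH.map (fun g => h * g) = μH ∧ μH.map (fun g => g * h) = μH)

include hμHinv

lemma int_left_inv {h : ↥SO3} (hh : h ∈ SO2in) {f : ↥SO3 → ℂ} (hf : Continuous f) :
    ∫ x, f (h * x) ∂μH = ∫ x, f x ∂μH := by
  have hm : Measurable fun g : ↥SO3 => h * g := by fun_prop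
  conv_rhs => rw [← (hμHinv h hh).1]
  rw [integral_map hm.aemeasurable hf.aestronglyMeasurable]

lemma int_right_inv {h : ↥SO3} (hh : h ∈ SO2in) {f : ↥SO3 → ℂ} (hf : Continuous f) :
    ∫ x, f (x * h) ∂μH = ∫ x, f x ∂μH := by
  have hm : Measurable fun g : ↥SO3 => g * h := by fun_prop
  conv_rhs => rw [← (hμHinv h hh).2]
  rw [integral_map hm.aemeasurable hf.aestronglyMeasurable]

lemma lint_left_inv {h : ↥SO3} (hh : h ∈ SO2in) {f : ↥SO3 → ℝ≥0∞} (hf : Measurable f) :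
    ∫⁻ x, f (h * x) ∂μH = ∫⁻ x, f x ∂μH := by
  have hm : Measurable fun g : ↥SO3 => h * g := by fun_prop
  conv_rhs => rw [← (hμHinv h hh).1]
  rw [lintegral_map hf hm]

lemma lint_right_inv {h : ↥SO3} (hh : h ∈ SO2in) {f : ↥SO3 → ℝ≥0∞} (hf : Measurable f) :
    ∫⁻ x, f (x * h) ∂μH = ∫⁻ x, f x ∂μH := by
  have hm : Measurable fun g : ↥SO3 => g * h := by fun_prop
  conv_rhs => rw [← (hμHinv h hh).2]
  rw [lintegral_map hf hm]

include hμHconc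

lemma map_inv_muH : μH.map (fun g : ↥SO3 => g⁻¹) = μH := by
  have hminv : Measurable (fun g : ↥SO3 => g⁻¹) := continuous_inv.measurable
  set ν := μH.map (fun g : ↥SO3 => g⁻¹) with hν
  have hνprob : IsProbabilityMeasure ν := Measure.isProbabilityMeasure_map hminv.aemeasurable
  have haeH : ∀ᵐ x ∂μH, x ∈ SO2in := by
    rw [MeasureTheory.ae_iff]
    convert hμHconc using 2
    rfl
  have haeHν : ∀ᵐ x ∂ν, x ∈ SO2in := by
    rw [MeasureTheory.ae_iff]
    rw [hν, Measure.map_apply hminv (measurableSet_SO2in.compl.congr (by ext x; simp))]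
    convert hμHconc using 2
    ext x
    simp only [Set.mem_preimage, Set.mem_compl_iff, Set.mem_setOf_eq, SetLike.mem_coe]
    exact not_congr ⟨fun hx => by simpa using SO2in.inv_mem hx, fun hx => SO2in.inv_mem hx⟩
  have hνleft : ∀ h ∈ SO2in, ∀ f : ↥SO3 → ℝ≥0∞, Measurable f →
      ∫⁻ x, f (h * x) ∂ν = ∫⁻ x, f x ∂ν := by
    intro h hh f hf
    have hm : Measurable fun x : ↥SO3 => f (h * x) := by fun_prop
    rw [hν, lintegral_map hm hminv, lintegral_map hf hminv]
    have : ∀ x : ↥SO3, f (h * x⁻¹) = (fun y => f y⁻¹) (x * h⁻¹) := by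
      intro x; simp [_root_.mul_inv_rev]
    simp_rw [this]
    exact lint_right_inv hμHinv (SO2in.inv_mem hh) (hf.comp hminv)
  have key : ∀ f : ↥SO3 → ℝ≥0∞, Measurable f → ∫⁻ x, f x ∂ν = ∫⁻ x, f x ∂μH := by
    intro f hf
    have hmulmeas : Measurable fun p : ↥SO3 × ↥SO3 => f (p.1 * p.2) :=
      hf.comp continuous_mul.measurable
    have eq1 : ∫⁻ x, ∫⁻ y, f (x * y) ∂ν ∂μH = ∫⁻ x, f x ∂ν := by
      have hae : ∀ᵐ x ∂μH, ∫⁻ y, f (x * y) ∂ν = ∫⁻ y, f y ∂ν :=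
        haeH.mono fun x hx => hνleft x hx f hf
      rw [lintegral_congr_ae hae, lintegral_const, measure_univ, mul_one]
    have eq2 : ∫⁻ x, ∫⁻ y, f (x * y) ∂ν ∂μH = ∫⁻ x, f x ∂μH := by
      rw [lintegral_lintegral_swap hmulmeas.aemeasurable]
      have hae : ∀ᵐ y ∂ν, ∫⁻ x, f (x * y) ∂μH = ∫⁻ x, f x ∂μH :=
        haeHν.mono fun y hy => lint_right_inv hμHinv hy hf
      rw [lintegral_congr_ae hae, lintegral_const, measure_univ, mul_one]
    rw [← eq1, eq2]
  ext s hs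
  have := key (s.indicator 1) (measurable_one.indicator hs)
  rwa [lintegral_indicator_one hs, lintegral_indicator_one hs] at this

lemma int_inv {f : ↥SO3 → ℂ} (hf : Continuous f) :
    ∫ x, f x⁻¹ ∂μH = ∫ x, f x ∂μH := by
  conv_rhs => rw [← map_inv_muH hμHconc hμHinv]
  rw [integral_map continuous_inv.measurable.aemeasurable hf.aestronglyMeasurable]

end Inv

end MeasureAux

section MeasureAux2

open Matrix MeasureTheory SO3Aux
set_option maxHeartbeats 1000000
set_option synthInstance.maxHeartbeats 1000000

variable {μH : Measure ↥SO3} [IsProbabilityMeasure μH]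
variable (hμHconc : μH ((SO2in : Set ↥SO3))ᶜ = 0)
variable (hμHinv : ∀ h ∈ SO2in,
      μH.map (fun g => h * g) = μH ∧ μH.map (fun g => g * h) = μH)

include hμHinv in
lemma qg_resp (f : C(↥SO3, ℂ)) : ∀ a b : ↥SO3, (dcSetoid SO2in).r a b →
    QG μH f a = QG μH f b := by
  rintro a b ⟨h₁, hh₁, h₂, hh₂, rfl⟩
  unfold QG
  symm
  calc ∫ u, ∫ v, f (u * (h₁ * a * h₂) * v) ∂μH ∂μH
      = ∫ u, ∫ v, f ((u * h₁) * a * v) ∂μH ∂μH := by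
        congr 1; funext u
        have h := int_left_inv hμHinv hh₂
          (f := fun v => f ((u * h₁) * a * v)) (by fun_prop)
        calc ∫ v, f (u * (h₁ * a * h₂) * v) ∂μH
            = ∫ v, f ((u * h₁) * a * (h₂ * v)) ∂μH := by
              congr 1; funext v; congr 1; group
          _ = ∫ v, f ((u * h₁) * a * v) ∂μH := h
    _ = ∫ u, ∫ v, f (u * a * v) ∂μH ∂μH := by
        have h := int_right_inv hμHinv hh₁
          (f := fun u => ∫ v, f (u * a * v) ∂μH)
          (cont_param μH f (l := fun u v => u * a * v) (by fun_prop))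
        exact h

include hμHconc hμHinv in
lemma qg_inv (f : C(↥SO3, ℂ)) (x : ↥SO3) :
    QG μH (fun g => f g⁻¹) x = QG μH f x⁻¹ := by
  unfold QG
  calc ∫ u, ∫ v, f ((u * x * v)⁻¹) ∂μH ∂μH
      = ∫ u, ∫ v, f (v * (x⁻¹ * u⁻¹)) ∂μH ∂μH := by
        congr 1; funext u
        have h := int_inv hμHconc hμHinv
          (f := fun v => f (v * (x⁻¹ * u⁻¹))) (by fun_prop)
        calc ∫ v, f ((u * x * v)⁻¹) ∂μH
            = ∫ v, (fun w => f (w * (x⁻¹ * u⁻¹))) v⁻¹ ∂μH := by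
              refine integral_congr_ae (.of_forall fun v => ?_)
              show f ((u * x * v)⁻¹) = f (v⁻¹ * (x⁻¹ * u⁻¹))
              congr 1
          _ = ∫ v, f (v * (x⁻¹ * u⁻¹)) ∂μH := h
    _ = ∫ u, ∫ v, f (v * (x⁻¹ * u)) ∂μH ∂μH := by
        have h := int_inv hμHconc hμHinv
          (f := fun u => ∫ v, f (v * (x⁻¹ * u)) ∂μH)
          (cont_param μH f (l := fun u v => v * (x⁻¹ * u)) (by fun_prop))
        exact h
    _ = ∫ v, ∫ u, f (v * (x⁻¹ * u)) ∂μH ∂μH := by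
        apply MeasureTheory.integral_integral_swap
        exact contIntegrable _ (f.continuous.comp (by fun_prop))
    _ = ∫ u, ∫ v, f (u * x⁻¹ * v) ∂μH ∂μH := by
        refine integral_congr_ae (.of_forall fun u => ?_)
        refine integral_congr_ae (.of_forall fun v => ?_)
        show f (u * (x⁻¹ * v)) = f (u * x⁻¹ * v)
        congr 1
        group

include hμHconc hμHinv in
lemma map_inv_nu {μ : Measure (DCos SO2in)} {ν : Measure ↥SO3}
    [IsProbabilityMeasure μ] [IsProbabilityMeasure ν]
    (hq : IsQtilde μH μ ν) : ν.map (fun g : ↥SO3 => g⁻¹) = ν := by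
  have hminv : Measurable (fun g : ↥SO3 => g⁻¹) := continuous_inv.measurable
  have : IsProbabilityMeasure (ν.map (fun g : ↥SO3 => g⁻¹)) :=
    Measure.isProbabilityMeasure_map hminv.aemeasurable
  have hC : ∀ f : C(↥SO3, ℂ), ∫ g, f g ∂(ν.map (fun g : ↥SO3 => g⁻¹)) = ∫ g, f g ∂ν := by
    intro f
    have hresp := qg_resp hμHinv f
    have hFc : Continuous (Quotient.lift (QG μH f) hresp : DCos SO2in → ℂ) :=
      Continuous.quotient_lift (qg_continuous f) hresp
    set F : DCos SO2in → ℂ := Quotient.lift (QG μH f) hresp with hF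
    have hFx : ∀ x : ↥SO3, F (Pmap SO2in x) = QG μH f x := fun _ => rfl
    have e1 := hq f F hFc hFx
    set fσ : C(↥SO3, ℂ) := ⟨fun g => f g⁻¹, f.continuous.comp continuous_inv⟩ with hfσ
    have hFx' : ∀ x : ↥SO3, F (Pmap SO2in x) = QG μH fσ x := by
      intro x
      have h5 : QG μH (fσ : ↥SO3 → ℂ) x = QG μH f x⁻¹ := qg_inv hμHconc hμHinv f x
      rw [h5, ← hFx x⁻¹, Pmap_inv x]
    have e2 := hq fσ F hFc hFx'
    rw [integral_map hminv.aemeasurable f.continuous.aestronglyMeasurable]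
    calc ∫ g, f g⁻¹ ∂ν = ∫ g, fσ g ∂ν := rfl
      _ = ∫ q, F q ∂μ := e2
      _ = ∫ g, f g ∂ν := e1.symm
  apply ext_of_forall_lintegral_eq_of_IsFiniteMeasure
  intro φ
  have hint : ∀ (m : Measure ↥SO3) [IsProbabilityMeasure m],
      ∫⁻ x, (φ x : ℝ≥0∞) ∂m = ENNReal.ofReal (∫ x, ((φ x : ℝ)) ∂m) := by
    intro m _
    rw [← MeasureTheory.lintegral_coe_eq_integral (fun x => φ x)
      (contIntegrable m (NNReal.continuous_coe.comp φ.continuous))]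
  rw [hint _, hint _]
  congr 1
  have hfc : Continuous fun x : ↥SO3 => (((φ x : ℝ)) : ℂ) :=
    Complex.continuous_ofReal.comp (NNReal.continuous_coe.comp φ.continuous)
  have := hC ⟨fun x => ((φ x : ℝ) : ℂ), hfc⟩
  simp only [ContinuousMap.coe_mk] at this
  have h1 : ∫ x, ((φ x : ℝ) : ℂ) ∂(ν.map (fun g : ↥SO3 => g⁻¹))
      = ((∫ x, (φ x : ℝ) ∂(ν.map (fun g : ↥SO3 => g⁻¹)) : ℝ) : ℂ) := integral_ofReal
  have h2 : ∫ x, ((φ x : ℝ) : ℂ) ∂ν = ((∫ x, (φ x : ℝ) ∂ν : ℝ) : ℂ) := integral_ofReal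
  rw [h1, h2] at this
  exact_mod_cast this

end MeasureAux2
/-- Let `G = SO(3)` and let `H` be the closed subgroup of matrices of block
form `diag(A, 1)` with `A ∈ SO(2)`.  Then the double coset convolution
`μ₁ ∗ μ₂ := P̃(Q̃(μ₁) ∗ Q̃(μ₂))` on probability Radon measures on `G//H` is commutative; in other
words, `(SO(3), SO(2))` is a Gelfand pair. -/
theorem so3_so2_gelfand_pair
    (μH : Measure (↥SO3)) [IsProbabilityMeasure μH]
    (hμHconc : μH ((SO2in : Set ↥SO3))ᶜ = 0)
    (hμHinv : ∀ h ∈ SO2in,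
      μH.map (fun g => h * g) = μH ∧ μH.map (fun g => g * h) = μH)
    (μ₁ μ₂ : Measure (DCos SO2in)) [IsProbabilityMeasure μ₁] [IsProbabilityMeasure μ₂]
    (ν₁ ν₂ : Measure (↥SO3)) [IsProbabilityMeasure ν₁] [IsProbabilityMeasure ν₂]
    (h₁ : IsQtilde μH μ₁ ν₁) (h₂ : IsQtilde μH μ₂ ν₂) :
    (mconv ν₁ ν₂).map (Pmap SO2in) = (mconv ν₂ ν₁).map (Pmap SO2in) := by
  have hPm : Measurable (Pmap SO2in) := measurable_Pmap _
  have hσm : Measurable (fun g : ↥SO3 => g⁻¹) := continuous_inv.measurable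
  have hmm : Measurable (fun p : ↥SO3 × ↥SO3 => p.1 * p.2) := continuous_mul.measurable
  have hPσ : (Pmap SO2in) ∘ (fun g : ↥SO3 => g⁻¹) = Pmap SO2in := funext fun g => Pmap_inv g
  have step2 : (mconv ν₁ ν₂).map (fun g : ↥SO3 => g⁻¹)
      = mconv (ν₂.map (fun g : ↥SO3 => g⁻¹)) (ν₁.map (fun g : ↥SO3 => g⁻¹)) := by
    unfold mconv
    rw [Measure.map_map hσm hmm,
        Measure.map_prod_map _ _ hσm hσm,
        Measure.map_map hmm (hσm.prodMap hσm),
        ← Measure.prod_swap (μ := ν₁) (ν := ν₂),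
        Measure.map_map (hmm.comp (hσm.prodMap hσm)) measurable_swap]
    congr 1
  have step1 : (mconv ν₁ ν₂).map (Pmap SO2in)
      = ((mconv ν₁ ν₂).map (fun g : ↥SO3 => g⁻¹)).map (Pmap SO2in) := by
    rw [Measure.map_map hPm hσm, hPσ]
  rw [step1, step2]
  rw [map_inv_nu hμHconc hμHinv h₂]
  rw [map_inv_nu hμHconc hμHinv h₁]
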